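/- Limit of dual q-Krawtchouk polynomials to Jacobi polynomials: for c,d>0 and integers 0 ≤ m ≤ l, lim_{q↑1} R_{l-m}(q^{-l} - (d/c)q^{-l}; c/d, 2l; q) = ((m+1)_{l-m}/(l+m+1)_{l-m}) (1+d/c)^{l-m} R_{l-m}^{(m,m)}((c-d)/(c+d)), where (a)_k is the Pochhammer symbol. -/

import Mathlib

open Filter Finset Topology

/-- finite q-shifted factorial `(a;q)_k = ∏_{j=0}^{k-1} (1 - a q^j)` -/
noncomputable def qPoch (q a : ℝ) (k : ℕ) : ℝ := ∏ j ∈ Finset.range k, (1 - a * q ^ j)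

/-- dual q-Krawtchouk polynomial `R_n(q^{-l} - t q^{-l}; t⁻¹, 2l; q)
= ₃φ₂(q^{-n}, q^{-l}, -t q^{-l}; q^{-2l}, 0; q, q)`. -/
noncomputable def dualqKrawtchouk (q : ℝ) (n l : ℕ) (t : ℝ) : ℝ :=
  ∑ k ∈ Finset.range (n + 1),
    qPoch q (q ^ (-(n : ℤ))) k * qPoch q (q ^ (-(l : ℤ))) k * qPoch q (-(t * q ^ (-(l : ℤ)))) k
      / (qPoch q (q ^ (-(2 * l : ℤ))) k * qPoch q q k) * q ^ k

/-- Jacobi polynomial `R_n^{(α,β)}(y) = ₂F₁(-n, n+α+β+1; α+1; (1-y)/2)`,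
normalized so that `R_n^{(α,β)}(1) = 1`. -/
noncomputable def jacobiR (n : ℕ) (α β : ℝ) (y : ℝ) : ℝ :=
  ∑ k ∈ Finset.range (n + 1),
    (∏ j ∈ Finset.range k, (-(n : ℝ) + j)) * (∏ j ∈ Finset.range k, ((n : ℝ) + α + β + 1 + j))
      / ((∏ j ∈ Finset.range k, (α + 1 + j)) * (Nat.factorial k)) * ((1 - y) / 2) ^ k

/-- Pochhammer symbol `(a)_k = a(a+1)⋯(a+k-1)`. -/
noncomputable def pochhammerR (a : ℝ) (k : ℕ) : ℝ := ∏ j ∈ Finset.range k, (a + j)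


/- ### auxiliary lemmas ### -/

lemma fact_ne (t : ℕ) : ((t.factorial : ℝ)) ≠ 0 :=
  Nat.cast_ne_zero.2 t.factorial_ne_zero

lemma prod_sub_eq (N : ℕ) : ∀ k, k ≤ N → ∏ j ∈ range k, ((N : ℝ) - j) = N.factorial / (N - k).factorial := by
  intro k
  induction k with
  | zero => simp [div_self (fact_ne N)]
  | succ k ih =>
    intro hk
    have h2 : ((N:ℝ) - k) = ((N - k : ℕ) : ℝ) := by
      have hkN : k ≤ N := by omega
      push_cast [hkN]; ring
    have h1 : N - k = (N - (k+1)) + 1 := by omega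
    rw [prod_range_succ, ih (by omega), h2, h1, Nat.factorial_succ, Nat.cast_mul]
    have h3 : ((N - (k+1)).factorial : ℝ) ≠ 0 := fact_ne _
    have h4 : (((N - (k+1)) + 1 : ℕ) : ℝ) ≠ 0 := Nat.cast_ne_zero.2 (by omega)
    rw [mul_comm (((N - (k+1)) + 1 : ℕ) : ℝ) _, div_mul_eq_div_div]
    exact div_mul_cancel₀ _ h4

lemma prod_add_eq (a : ℕ) : ∀ k, ∏ j ∈ range k, ((a : ℝ) + 1 + j) = (a + k).factorial / a.factorial := by
  intro k
  induction k with
  | zero => simp [div_self (fact_ne a)]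
  | succ k ih =>
    rw [prod_range_succ, ih]
    have e : a + (k+1) = (a + k) + 1 := by omega
    rw [e, Nat.factorial_succ, Nat.cast_mul]
    have h4 : (((a+k) + 1 : ℕ) : ℝ) ≠ 0 := Nat.cast_ne_zero.2 (by omega)
    rw [div_mul_eq_mul_div]
    rw [show ((a:ℝ) + 1 + ↑k) = (((a+k)+1 : ℕ) : ℝ) by push_cast; ring]
    ring

lemma prod_add_one_eq (k : ℕ) : ∏ j ∈ range k, ((j : ℝ) + 1) = k.factorial := by
  induction k with
  | zero => simp
  | succ k ih => rw [prod_range_succ, ih, Nat.factorial_succ]; push_cast; ring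

/-- swap sign in a product of differences -/
lemma prod_sub_swap (a : ℝ) (k : ℕ) :
    ∏ j ∈ range k, ((j : ℝ) - a) = (-1)^k * ∏ j ∈ range k, (a - j) := by
  have : ∀ j ∈ range k, ((j : ℝ) - a) = (-1) * (a - j) := by intro j _; ring
  rw [Finset.prod_congr rfl this, Finset.prod_mul_distrib, Finset.prod_const, card_range]

lemma alt_step (r J x : ℕ) :
    ∑ k ∈ range (J+1+1), (-1:ℝ)^k * ((J+1).choose k) * ((x+k).choose r)
  = (∑ k ∈ range (J+1), (-1:ℝ)^k * (J.choose k) * ((x+k).choose r))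
  - ∑ k ∈ range (J+1), (-1:ℝ)^k * (J.choose k) * ((x+1+k).choose r) := by
  rw [Finset.sum_range_succ' (fun k => (-1:ℝ)^k * ((J+1).choose k) * ((x+k).choose r)) (J+1),
    Finset.sum_range_succ' (fun k => (-1:ℝ)^k * (J.choose k) * ((x+k).choose r)) J]
  have h2 : ∑ k ∈ range (J+1), (-1:ℝ)^(k+1) * ((J+1).choose (k+1)) * ((x+(k+1)).choose r)
      = (∑ k ∈ range (J+1), -((-1:ℝ)^k * (J.choose k) * ((x+1+k).choose r)))
        + ∑ k ∈ range (J+1), -((-1:ℝ)^k * (J.choose (k+1)) * ((x+(k+1)).choose r)) := by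
    rw [← Finset.sum_add_distrib]
    refine Finset.sum_congr rfl fun k _ => ?_
    have e : x + 1 + k = x + (k+1) := by omega
    rw [Nat.choose_succ_succ', e]
    push_cast
    ring
  rw [h2]
  have h3 : ∑ k ∈ range (J+1), -((-1:ℝ)^k * (J.choose (k+1)) * ((x+(k+1)).choose r))
      = ∑ k ∈ range J, -((-1:ℝ)^k * (J.choose (k+1)) * ((x+(k+1)).choose r)) := by
    rw [Finset.sum_range_succ, Nat.choose_succ_self]
    simp
  rw [h3, Finset.sum_neg_distrib, Finset.sum_neg_distrib]
  simp only [pow_zero, Nat.choose_zero_right, Nat.cast_one, mul_one, one_mul, Nat.add_zero]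
  have h5 : ∑ k ∈ range J, (-1:ℝ)^(k+1) * (J.choose (k+1)) * ((x+(k+1)).choose r)
      = - ∑ k ∈ range J, (-1:ℝ)^k * (J.choose (k+1)) * ((x+(k+1)).choose r) := by
    rw [← Finset.sum_neg_distrib]
    exact Finset.sum_congr rfl fun k _ => by ring
  rw [h5]
  ring

lemma alt_sum (r : ℕ) : ∀ J, J ≤ r → ∀ x : ℕ,
    ∑ k ∈ range (J+1), (-1:ℝ)^k * (J.choose k) * ((x+k).choose r)
      = (-1)^J * (x.choose (r - J)) := by
  intro J
  induction J with
  | zero => intro _ x; simp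
  | succ J ih =>
    intro hJ x
    rw [alt_step r J x, ih (by omega) x, ih (by omega) (x+1)]
    have ht : r - J = (r - (J+1)) + 1 := by omega
    rw [ht, Nat.choose_succ_succ]
    push_cast
    ring

lemma alt_sum' (r N : ℕ) (hN : N ≤ r) (x : ℕ) :
    ∑ i ∈ range (N+1), (-1:ℝ)^i * (N.choose i) * ((x + (N - i)).choose r)
      = x.choose (r - N) := by
  have hrefl := Finset.sum_range_reflect
    (fun i => (-1:ℝ)^i * (N.choose i) * ((x + (N - i)).choose r)) (N+1)
  rw [← hrefl]
  have : ∀ j ∈ range (N+1),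
      (-1:ℝ)^(N+1-1-j) * (N.choose (N+1-1-j)) * ((x + (N - (N+1-1-j))).choose r)
      = (-1:ℝ)^N * ((-1:ℝ)^j * (N.choose j) * ((x + j).choose r)) := by
    intro j hj
    have hjN : j ≤ N := by simpa [Nat.lt_succ_iff] using hj
    have e1 : N + 1 - 1 - j = N - j := by omega
    have e2 : N - (N - j) = j := by omega
    have e3 : N.choose (N - j) = N.choose j := Nat.choose_symm hjN
    have e4 : (-1:ℝ)^(N-j) = (-1:ℝ)^N * (-1:ℝ)^j := by
      have h1 : (-1:ℝ)^(N-j) * (-1:ℝ)^j = (-1:ℝ)^N := by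
        rw [← pow_add]; congr 1; omega
      have h2 : (-1:ℝ)^j * (-1:ℝ)^j = 1 := by
        rw [← pow_add, ← two_mul, pow_mul]; norm_num
      calc (-1:ℝ)^(N-j) = (-1:ℝ)^(N-j) * ((-1:ℝ)^j * (-1:ℝ)^j) := by rw [h2, mul_one]
        _ = ((-1:ℝ)^(N-j) * (-1:ℝ)^j) * (-1:ℝ)^j := by ring
        _ = (-1:ℝ)^N * (-1:ℝ)^j := by rw [h1]
    rw [e1, e2, e3, e4]
    ring
  rw [Finset.sum_congr rfl this, ← Finset.mul_sum, alt_sum r N hN x]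
  rw [← mul_assoc, ← pow_add, ← two_mul, pow_mul]
  norm_num

lemma coef2 (n m J : ℕ) (hJ : J ≤ n) :
    ∑ k ∈ range (J+1),
      (-1:ℝ)^k * (n.factorial) * ((n+m+m+k).factorial) * (m.factorial)
        / ((n-k).factorial * ((n+m+m).factorial) * ((m+k).factorial) * k.factorial)
        * (((n-k).choose (J-k) : ℕ) : ℝ)
    = (-1:ℝ)^J * n.factorial * m.factorial * ((n+m).factorial)
        / ((n-J).factorial * J.factorial * ((n+m-J).factorial) * ((m+J).factorial)) := by
  have hstep : ∀ k ∈ range (J+1),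
      (-1:ℝ)^k * (n.factorial) * ((n+m+m+k).factorial) * (m.factorial)
        / ((n-k).factorial * ((n+m+m).factorial) * ((m+k).factorial) * k.factorial)
        * (((n-k).choose (J-k) : ℕ) : ℝ)
      = (n.factorial * m.factorial * ((n+m).factorial)
          / (((n+m+m).factorial) * ((n-J).factorial) * J.factorial))
        * ((-1:ℝ)^k * (J.choose k) * (((n+m+m) + k).choose (n+m))) := by
    intro k hk
    have hkJ : k ≤ J := by simpa [Nat.lt_succ_iff] using hk
    have hkn : k ≤ n := le_trans hkJ hJ
    have c1 : (((n-k).choose (J-k) : ℕ) : ℝ)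
        = ((n-k).factorial : ℝ) / ((J-k).factorial * ((n-J).factorial)) := by
      rw [Nat.cast_choose ℝ (by omega : J - k ≤ n - k),
        show n - k - (J - k) = n - J from by omega]
    have c2 : ((J.choose k : ℕ) : ℝ) = (J.factorial : ℝ) / (k.factorial * ((J-k).factorial)) := by
      rw [Nat.cast_choose ℝ hkJ]
    have c3 : ((((n+m+m) + k).choose (n+m) : ℕ) : ℝ)
        = (((n+m+m)+k).factorial : ℝ) / ((n+m).factorial * ((m+k).factorial)) := by
      rw [Nat.cast_choose ℝ (by omega : n + m ≤ n + m + m + k),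
        show n + m + m + k - (n + m) = m + k from by omega]
    rw [c1, c2, c3]
    field_simp [fact_ne]
  rw [Finset.sum_congr rfl hstep, ← Finset.mul_sum,
    alt_sum (n+m) J (by omega) (n+m+m)]
  have c4 : (((n+m+m).choose (n+m-J) : ℕ) : ℝ)
      = ((n+m+m).factorial : ℝ) / ((n+m-J).factorial * ((m+J).factorial)) := by
    rw [Nat.cast_choose ℝ (by omega : n + m - J ≤ n + m + m),
      show n + m + m - (n + m - J) = m + J from by omega]
  rw [c4]
  field_simp [fact_ne]

lemma coef1 (n m J : ℕ) (hJ : J ≤ n) :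
    ∑ k ∈ range (n+1),
      (-1:ℝ)^k * n.factorial * ((n+m).factorial) * ((2*(n+m)-k).factorial)
        / ((n-k).factorial * ((n+m-k).factorial) * ((2*(n+m)).factorial) * k.factorial)
        * ((k.choose J : ℕ) : ℝ)
    = (-1:ℝ)^J * n.factorial * ((n+m).factorial) * ((n+m).factorial) * ((n+m+m).factorial)
        / ((2*(n+m)).factorial * J.factorial * ((n-J).factorial) * ((m+J).factorial)
            * ((n+m-J).factorial)) := by
  set f : ℕ → ℝ := fun k =>
      (-1:ℝ)^k * n.factorial * ((n+m).factorial) * ((2*(n+m)-k).factorial)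
        / ((n-k).factorial * ((n+m-k).factorial) * ((2*(n+m)).factorial) * k.factorial)
        * ((k.choose J : ℕ) : ℝ) with hf
  have hsub : Finset.Ico J (n+1) ⊆ range (n+1) := by
    intro k hk
    simp only [Finset.mem_Ico] at hk
    simp [hk.2]
  have hzero : ∀ k ∈ range (n+1), k ∉ Finset.Ico J (n+1) → f k = 0 := by
    intro k hk hk2
    have : k < J := by
      simp only [Finset.mem_range] at hk
      simp only [Finset.mem_Ico] at hk2
      omega
    simp [hf, Nat.choose_eq_zero_of_lt this]
  rw [← Finset.sum_subset hsub hzero, Finset.sum_Ico_eq_sum_range]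
  have hNJ : n + 1 - J = (n - J) + 1 := by omega
  rw [hNJ]
  have hstep : ∀ i ∈ range ((n-J)+1),
      f (J + i)
      = ((-1:ℝ)^J * n.factorial * ((n+m).factorial) * ((n+m).factorial)
          / ((2*(n+m)).factorial * J.factorial * ((n-J).factorial)))
        * ((-1:ℝ)^i * ((n-J).choose i) * (((n+m+m) + ((n-J) - i)).choose (n+m))) := by
    intro i hi
    have hiN : i ≤ n - J := by simpa [Nat.lt_succ_iff] using hi
    have c1 : (((J+i).choose J : ℕ) : ℝ)
        = ((J+i).factorial : ℝ) / (J.factorial * (i.factorial)) := by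
      rw [Nat.cast_choose ℝ (by omega : J ≤ J + i), show J + i - J = i from by omega]
    have c2 : (((n-J).choose i : ℕ) : ℝ)
        = ((n-J).factorial : ℝ) / (i.factorial * ((n-J-i).factorial)) := by
      rw [Nat.cast_choose ℝ hiN]
    have c3 : ((((n+m+m) + ((n-J) - i)).choose (n+m) : ℕ) : ℝ)
        = (((n+m+m) + ((n-J) - i)).factorial : ℝ)
          / ((n+m).factorial * ((n+m-J-i).factorial)) := by
      rw [Nat.cast_choose ℝ (by omega : n + m ≤ (n+m+m) + ((n-J) - i)),
        show (n+m+m) + ((n-J) - i) - (n+m) = n+m-J-i from by omega]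
    have e1 : n - (J + i) = n - J - i := by omega
    have e2 : n + m - (J + i) = n + m - J - i := by omega
    have e3 : 2*(n+m) - (J + i) = (n+m+m) + ((n-J) - i) := by omega
    rw [hf]
    simp only []
    rw [c1, e1, e2, e3, c2, c3]
    have e4 : (-1:ℝ)^(J+i) = (-1:ℝ)^J * (-1:ℝ)^i := by rw [pow_add]
    rw [e4]
    field_simp [fact_ne]
  rw [Finset.sum_congr rfl hstep, ← Finset.mul_sum,
    alt_sum' (n+m) (n-J) (by omega) (n+m+m)]
  have c4 : (((n+m+m).choose (n+m-(n-J)) : ℕ) : ℝ)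
      = ((n+m+m).factorial : ℝ) / (((m+J)).factorial * ((n+m-J).factorial)) := by
    rw [Nat.cast_choose ℝ (by omega : n + m - (n-J) ≤ n + m + m),
      show n+m-(n-J) = m + J from by omega,
      show n + m + m - (m+J) = n+m-J from by omega]
  rw [c4]
  field_simp [fact_ne]

lemma one_add_pow (u : ℝ) (k : ℕ) :
    (1+u)^k = ∑ J ∈ range (k+1), u^J * ((k.choose J : ℕ) : ℝ) := by
  rw [show (1:ℝ)+u = u+1 from by ring, add_pow]
  exact Finset.sum_congr rfl fun J _ => by rw [one_pow, mul_one]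

lemma one_add_pow' (u : ℝ) (n k : ℕ) (hk : k ≤ n) :
    (1+u)^k = ∑ J ∈ range (n+1), u^J * ((k.choose J : ℕ) : ℝ) := by
  rw [one_add_pow]
  apply Finset.sum_subset
  · intro x hx
    simp only [Finset.mem_range] at *
    omega
  · intro J hJ hJ2
    have : k < J := by
      simp only [Finset.mem_range] at hJ hJ2
      omega
    simp [Nat.choose_eq_zero_of_lt this]

lemma lhs_eq (u : ℝ) (n m : ℕ) :
    ∑ k ∈ range (n+1),
        (∏ j ∈ range k, (((j:ℝ) - (n:ℝ))/((j:ℝ) - 2*((n+m : ℕ) : ℝ)))) *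
        (∏ j ∈ range k, (((j:ℝ) - ((n+m : ℕ):ℝ))/((j:ℝ) + 1))) * (1+u)^k
    = ∑ J ∈ range (n+1),
        u^J * ((-1:ℝ)^J * n.factorial * ((n+m).factorial) * ((n+m).factorial) * ((n+m+m).factorial)
        / ((2*(n+m)).factorial * J.factorial * ((n-J).factorial) * ((m+J).factorial)
            * ((n+m-J).factorial))) := by
  have hterm : ∀ k ∈ range (n+1),
      (∏ j ∈ range k, (((j:ℝ) - (n:ℝ))/((j:ℝ) - 2*((n+m : ℕ) : ℝ)))) *
        (∏ j ∈ range k, (((j:ℝ) - ((n+m : ℕ):ℝ))/((j:ℝ) + 1))) * (1+u)^k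
      = ∑ J ∈ range (n+1),
          ((-1:ℝ)^k * n.factorial * ((n+m).factorial) * ((2*(n+m)-k).factorial)
            / ((n-k).factorial * ((n+m-k).factorial) * ((2*(n+m)).factorial) * k.factorial)
            * ((k.choose J : ℕ) : ℝ)) * u^J := by
    intro k hk
    have hkn : k ≤ n := by simpa [Nat.lt_succ_iff] using hk
    have p1 : ∏ j ∈ range k, (((j:ℝ) - (n:ℝ))/((j:ℝ) - 2*((n+m : ℕ) : ℝ)))
        = ((-1:ℝ)^k * (n.factorial / (n-k).factorial))
          / ((-1:ℝ)^k * ((2*(n+m)).factorial / (2*(n+m)-k).factorial)) := by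
      rw [Finset.prod_div_distrib, prod_sub_swap ((n:ℝ)) k, prod_sub_eq n k hkn]
      have : ∏ j ∈ range k, ((j:ℝ) - 2*((n+m : ℕ) : ℝ))
          = ∏ j ∈ range k, ((j:ℝ) - ((2*(n+m) : ℕ) : ℝ)) := by
        refine Finset.prod_congr rfl fun j _ => ?_
        push_cast
        ring
      rw [this, prod_sub_swap (((2*(n+m) : ℕ)) : ℝ) k, prod_sub_eq (2*(n+m)) k (by omega)]
    have p2 : ∏ j ∈ range k, (((j:ℝ) - ((n+m : ℕ):ℝ))/((j:ℝ) + 1))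
        = ((-1:ℝ)^k * ((n+m).factorial / (n+m-k).factorial)) / (k.factorial : ℝ) := by
      rw [Finset.prod_div_distrib, prod_sub_swap (((n+m : ℕ)):ℝ) k,
        prod_sub_eq (n+m) k (by omega), prod_add_one_eq]
    rw [p1, p2, one_add_pow' u n k hkn, Finset.mul_sum]
    refine Finset.sum_congr rfl fun J _ => ?_
    have hneg : (-1:ℝ)^k ≠ 0 := pow_ne_zero _ (by norm_num)
    field_simp [fact_ne]
  rw [Finset.sum_congr rfl hterm, Finset.sum_comm]
  refine Finset.sum_congr rfl fun J hJ => ?_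
  have hJn : J ≤ n := by simpa [Nat.lt_succ_iff] using hJ
  have : ∀ k ∈ range (n+1),
      ((-1:ℝ)^k * n.factorial * ((n+m).factorial) * ((2*(n+m)-k).factorial)
        / ((n-k).factorial * ((n+m-k).factorial) * ((2*(n+m)).factorial) * k.factorial)
        * ((k.choose J : ℕ) : ℝ)) * u^J
      = u^J * ((-1:ℝ)^k * n.factorial * ((n+m).factorial) * ((2*(n+m)-k).factorial)
        / ((n-k).factorial * ((n+m-k).factorial) * ((2*(n+m)).factorial) * k.factorial)
        * ((k.choose J : ℕ) : ℝ)) := fun k _ => by ring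
  rw [Finset.sum_congr rfl this, ← Finset.mul_sum, coef1 n m J hJn]

lemma rhs_eq (u : ℝ) (hu : 0 < u) (n m : ℕ) :
    (∏ j ∈ range n, ((m:ℝ) + 1 + j)) / (∏ j ∈ range n, (((n+m:ℕ):ℝ) + (m:ℝ) + 1 + j)) * (1+u)^n *
      ∑ k ∈ range (n+1),
        (∏ j ∈ range k, (-(n:ℝ) + j)) * (∏ j ∈ range k, ((n:ℝ) + (m:ℝ) + (m:ℝ) + 1 + j))
          / ((∏ j ∈ range k, ((m:ℝ) + 1 + j)) * (k.factorial : ℝ)) * (u/(1+u))^k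
    = ∑ J ∈ range (n+1),
        u^J * ((-1:ℝ)^J * n.factorial * ((n+m).factorial) * ((n+m).factorial) * ((n+m+m).factorial)
        / ((2*(n+m)).factorial * J.factorial * ((n-J).factorial) * ((m+J).factorial)
            * ((n+m-J).factorial))) := by
  have h1u : (1:ℝ) + u ≠ 0 := by positivity
  have hP1 : ∏ j ∈ range n, ((m:ℝ) + 1 + j) = ((n+m).factorial : ℝ) / m.factorial := by
    rw [prod_add_eq m n, show m + n = n + m from by omega]
  have hP2 : ∏ j ∈ range n, (((n+m:ℕ):ℝ) + (m:ℝ) + 1 + j)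
      = ((2*(n+m)).factorial : ℝ) / ((n+m+m).factorial) := by
    have : ∀ j ∈ range n, (((n+m:ℕ):ℝ) + (m:ℝ) + 1 + j) = (((n+m+m : ℕ):ℝ) + 1 + j) := by
      intro j _; push_cast; ring
    rw [Finset.prod_congr rfl this, prod_add_eq (n+m+m) n,
      show n + m + m + n = 2*(n+m) from by omega]
  rw [hP1, hP2, Finset.mul_sum]
  have hrep : ∀ k ∈ range (n+1),
      ((n+m).factorial / (m.factorial:ℝ) / ((2*(n+m)).factorial / ((n+m+m).factorial:ℝ)) * (1+u)^n) *
        ((∏ j ∈ range k, (-(n:ℝ) + j)) * (∏ j ∈ range k, ((n:ℝ) + (m:ℝ) + (m:ℝ) + 1 + j))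
          / ((∏ j ∈ range k, ((m:ℝ) + 1 + j)) * (k.factorial : ℝ)) * (u/(1+u))^k)
      = ∑ J ∈ range (n+1), (if k ≤ J then
          (((n+m).factorial / (m.factorial:ℝ) / ((2*(n+m)).factorial / ((n+m+m).factorial:ℝ)))
            * ((-1:ℝ)^k * (n.factorial) * ((n+m+m+k).factorial) * (m.factorial)
              / ((n-k).factorial * ((n+m+m).factorial) * ((m+k).factorial) * k.factorial)
              * (((n-k).choose (J-k) : ℕ) : ℝ)) * u^J) else 0) := by
    intro k hk
    have hkn : k ≤ n := by simpa [Nat.lt_succ_iff] using hk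
    have hfil : (range (n+1)).filter (fun J => k ≤ J) = Finset.Ico k (n+1) := by
      ext j
      simp only [Finset.mem_filter, Finset.mem_range, Finset.mem_Ico]
      omega
    rw [← Finset.sum_filter, hfil, Finset.sum_Ico_eq_sum_range,
      show n + 1 - k = (n-k) + 1 from by omega]
    have hterm : ∀ i ∈ range ((n-k)+1),
        ((n+m).factorial / (m.factorial:ℝ) / ((2*(n+m)).factorial / ((n+m+m).factorial:ℝ)))
          * ((-1:ℝ)^k * (n.factorial) * ((n+m+m+k).factorial) * (m.factorial)
            / ((n-k).factorial * ((n+m+m).factorial) * ((m+k).factorial) * k.factorial)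
            * (((n-k).choose ((k+i)-k) : ℕ) : ℝ)) * u^(k+i)
        = ((n+m).factorial / (m.factorial:ℝ) / ((2*(n+m)).factorial / ((n+m+m).factorial:ℝ))
            * ((-1:ℝ)^k * (n.factorial) * ((n+m+m+k).factorial) * (m.factorial)
              / ((n-k).factorial * ((n+m+m).factorial) * ((m+k).factorial) * k.factorial)) * u^k)
          * (u^i * (((n-k).choose i : ℕ) : ℝ)) := by
      intro i _
      rw [show (k+i)-k = i from by omega, pow_add]
      ring
    rw [Finset.sum_congr rfl hterm, ← Finset.mul_sum, ← one_add_pow u (n-k)]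
    have q1 : ∏ j ∈ range k, (-(n:ℝ) + j) = (-1:ℝ)^k * ((n.factorial:ℝ) / (n-k).factorial) := by
      have : ∀ j ∈ range k, (-(n:ℝ) + j) = ((j:ℝ) - n) := fun j _ => by ring
      rw [Finset.prod_congr rfl this, prod_sub_swap ((n:ℝ)) k, prod_sub_eq n k hkn]
    have q2 : ∏ j ∈ range k, ((n:ℝ) + (m:ℝ) + (m:ℝ) + 1 + j)
        = ((n+m+m+k).factorial : ℝ) / ((n+m+m).factorial) := by
      have : ∀ j ∈ range k, ((n:ℝ) + (m:ℝ) + (m:ℝ) + 1 + j) = (((n+m+m:ℕ):ℝ) + 1 + j) := by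
        intro j _; push_cast; ring
      rw [Finset.prod_congr rfl this, prod_add_eq (n+m+m) k]
    have q3 : ∏ j ∈ range k, ((m:ℝ) + 1 + j) = ((m+k).factorial : ℝ) / m.factorial := by
      rw [prod_add_eq m k]
    have hsplit : (1+u)^n = (1+u)^(n-k) * (1+u)^k := by
      rw [← pow_add]
      congr 1
      omega
    rw [q1, q2, q3, div_pow, hsplit]
    have hpk : ((1:ℝ)+u)^k ≠ 0 := pow_ne_zero _ h1u
    have hpnk : ((1:ℝ)+u)^(n-k) ≠ 0 := pow_ne_zero _ h1u
    field_simp [fact_ne]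
  rw [Finset.sum_congr rfl hrep, Finset.sum_comm]
  refine Finset.sum_congr rfl fun J hJ => ?_
  have hJn : J ≤ n := by simpa [Nat.lt_succ_iff] using hJ
  have hfil2 : (range (n+1)).filter (fun k => k ≤ J) = range (J+1) := by
    ext j
    simp only [Finset.mem_filter, Finset.mem_range]
    omega
  rw [← Finset.sum_filter, hfil2]
  have hterm2 : ∀ k ∈ range (J+1),
      (((n+m).factorial / (m.factorial:ℝ) / ((2*(n+m)).factorial / ((n+m+m).factorial:ℝ)))
        * ((-1:ℝ)^k * (n.factorial) * ((n+m+m+k).factorial) * (m.factorial)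
          / ((n-k).factorial * ((n+m+m).factorial) * ((m+k).factorial) * k.factorial)
          * (((n-k).choose (J-k) : ℕ) : ℝ)) * u^J)
      = (((n+m).factorial / (m.factorial:ℝ) / ((2*(n+m)).factorial / ((n+m+m).factorial:ℝ))) * u^J)
        * ((-1:ℝ)^k * (n.factorial) * ((n+m+m+k).factorial) * (m.factorial)
          / ((n-k).factorial * ((n+m+m).factorial) * ((m+k).factorial) * k.factorial)
          * (((n-k).choose (J-k) : ℕ) : ℝ)) := fun k _ => by ring
  rw [Finset.sum_congr rfl hterm2, ← Finset.mul_sum, coef2 n m J hJn]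
  field_simp [fact_ne]


lemma zpow_slope_tendsto (c : ℤ) :
    Tendsto (fun q : ℝ => (q ^ c - 1) / (q - 1)) (𝓝[Set.Ioo (0:ℝ) 1] 1) (𝓝 (c : ℝ)) := by
  have h := hasDerivAt_zpow c (1:ℝ) (Or.inl one_ne_zero)
  rw [hasDerivAt_iff_tendsto_slope] at h
  have hmono : 𝓝[Set.Ioo (0:ℝ) 1] (1:ℝ) ≤ 𝓝[≠] (1:ℝ) :=
    nhdsWithin_mono 1 (fun x hx => ne_of_lt hx.2)
  have h2 := h.mono_left hmono
  simp only [one_zpow, mul_one] at h2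
  exact h2.congr fun q => by rw [slope_def_field, one_zpow]

lemma ratio_tendsto (a b : ℤ) (hb : b ≠ 0) :
    Tendsto (fun q : ℝ => (1 - q ^ a) / (1 - q ^ b)) (𝓝[Set.Ioo (0:ℝ) 1] 1)
      (𝓝 ((a:ℝ)/(b:ℝ))) := by
  have hdiv := (zpow_slope_tendsto a).div (zpow_slope_tendsto b) (Int.cast_ne_zero.mpr hb)
  refine hdiv.congr' ?_
  filter_upwards [self_mem_nhdsWithin] with q hq
  have hq1 : q - 1 ≠ 0 := sub_ne_zero.mpr (ne_of_lt hq.2)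
  simp only [Pi.div_apply]
  rw [div_div_div_cancel_right₀ hq1, ← neg_sub (q^a) 1, ← neg_sub (q^b) 1, neg_div_neg_eq]

lemma zpow_tendsto (c : ℤ) :
    Tendsto (fun q : ℝ => q ^ c) (𝓝[Set.Ioo (0:ℝ) 1] 1) (𝓝 1) := by
  have h := (hasDerivAt_zpow c (1:ℝ) (Or.inl one_ne_zero)).continuousAt
  have := h.continuousWithinAt (s := Set.Ioo (0:ℝ) 1)
  simpa [one_zpow] using this.tendsto

lemma tendsto_aux (u : ℝ) (n l : ℕ) (hnl : n ≤ l) :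
    Tendsto (fun q : ℝ => dualqKrawtchouk q n l u) (𝓝[Set.Ioo (0:ℝ) 1] 1)
      (𝓝 (∑ k ∈ range (n+1),
        (∏ j ∈ range k, (((j:ℝ) - (n:ℝ))/((j:ℝ) - 2*(l:ℝ)))) *
        (∏ j ∈ range k, (((j:ℝ) - (l:ℝ))/((j:ℝ) + 1))) * (1+u)^k)) := by
  simp only [dualqKrawtchouk]
  apply tendsto_finset_sum
  intro k hk
  have hkn : k ≤ n := by simpa [Nat.lt_succ_iff] using hk
  have T1 : Tendsto (fun q : ℝ => ∏ j ∈ range k, ((1 - q^((j:ℤ) - n))/(1 - q^((j:ℤ) - 2*l))))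
      (𝓝[Set.Ioo (0:ℝ) 1] 1) (𝓝 (∏ j ∈ range k, (((j:ℝ) - (n:ℝ))/((j:ℝ) - 2*(l:ℝ))))) := by
    apply tendsto_finset_prod
    intro j hj
    have hj' : j < k := mem_range.mp hj
    have hb : ((j:ℤ) - 2*l) ≠ 0 := by omega
    have hval : ((((j:ℤ) - n : ℤ)):ℝ)/((((j:ℤ) - 2*l : ℤ)):ℝ)
        = ((j:ℝ) - (n:ℝ))/((j:ℝ) - 2*(l:ℝ)) := by push_cast; ring
    exact hval ▸ ratio_tendsto ((j:ℤ) - n) ((j:ℤ) - 2*l) hb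
  have T2 : Tendsto (fun q : ℝ => ∏ j ∈ range k, ((1 - q^((j:ℤ) - l))/(1 - q^((j:ℤ) + 1))))
      (𝓝[Set.Ioo (0:ℝ) 1] 1) (𝓝 (∏ j ∈ range k, (((j:ℝ) - (l:ℝ))/((j:ℝ) + 1)))) := by
    apply tendsto_finset_prod
    intro j hj
    have hb : ((j:ℤ) + 1) ≠ 0 := by omega
    have hval : ((((j:ℤ) - l : ℤ)):ℝ)/((((j:ℤ) + 1 : ℤ)):ℝ)
        = ((j:ℝ) - (l:ℝ))/((j:ℝ) + 1) := by push_cast; ring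
    exact hval ▸ ratio_tendsto ((j:ℤ) - l) ((j:ℤ) + 1) hb
  have T3 : Tendsto (fun q : ℝ => ∏ j ∈ range k, (1 + u * q^((j:ℤ) - l)))
      (𝓝[Set.Ioo (0:ℝ) 1] 1) (𝓝 ((1+u)^k)) := by
    have h := tendsto_finset_prod (range k)
      (fun j (_ : j ∈ range k) =>
        (tendsto_const_nhds.add (tendsto_const_nhds.mul (zpow_tendsto ((j:ℤ) - l))) :
          Tendsto (fun q : ℝ => 1 + u * q^((j:ℤ) - l)) (𝓝[Set.Ioo (0:ℝ) 1] 1) (𝓝 (1 + u * 1))))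
    simpa [mul_one] using h
  have T4 : Tendsto (fun q : ℝ => q ^ k) (𝓝[Set.Ioo (0:ℝ) 1] 1) (𝓝 1) := by
    have := ((continuous_pow k).tendsto 1).mono_left (nhdsWithin_le_nhds (s := Set.Ioo (0:ℝ) 1))
    simpa using this
  have combined := ((T1.mul T2).mul T3).mul T4
  rw [mul_one] at combined
  refine combined.congr' ?_
  filter_upwards [self_mem_nhdsWithin] with q hq
  have hq0 : q ≠ 0 := ne_of_gt hq.1
  have e1 : qPoch q (q ^ (-(n : ℤ))) k = ∏ j ∈ range k, (1 - q^((j:ℤ) - n)) := by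
    refine prod_congr rfl fun j _ => ?_
    rw [← zpow_natCast q j, ← zpow_add₀ hq0, show (-(n:ℤ) + (j:ℤ)) = (j:ℤ) - n from by ring]
  have e2 : qPoch q (q ^ (-(l : ℤ))) k = ∏ j ∈ range k, (1 - q^((j:ℤ) - l)) := by
    refine prod_congr rfl fun j _ => ?_
    rw [← zpow_natCast q j, ← zpow_add₀ hq0, show (-(l:ℤ) + (j:ℤ)) = (j:ℤ) - l from by ring]
  have e4 : qPoch q (q ^ (-(2 * l : ℤ))) k = ∏ j ∈ range k, (1 - q^((j:ℤ) - 2*l)) := by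
    refine prod_congr rfl fun j _ => ?_
    rw [← zpow_natCast q j, ← zpow_add₀ hq0,
      show (-(2*(l:ℤ)) + (j:ℤ)) = (j:ℤ) - 2*l from by ring]
  have e3 : qPoch q (-(u * q ^ (-(l : ℤ)))) k = ∏ j ∈ range k, (1 + u * q^((j:ℤ) - l)) := by
    refine prod_congr rfl fun j _ => ?_
    rw [show -(u * q ^ (-(l:ℤ))) * q ^ j = -(u * (q ^ (-(l:ℤ)) * q ^ ((j:ℕ):ℤ))) from by
      rw [zpow_natCast]; ring]
    rw [← zpow_add₀ hq0, show (-(l:ℤ) + (j:ℤ)) = (j:ℤ) - l from by ring, sub_neg_eq_add]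
  have e5 : qPoch q q k = ∏ j ∈ range k, (1 - q^((j:ℤ) + 1)) := by
    refine prod_congr rfl fun j _ => ?_
    rw [show q * q ^ j = q ^ (j+1) from (pow_succ' q j).symm, ← zpow_natCast q (j+1)]
    norm_num
  simp only [qPoch] at e1 e2 e3 e4 e5 ⊢
  rw [e1, e2, e3, e4, e5, Finset.prod_div_distrib, Finset.prod_div_distrib]
  ring

/-- As `q ↑ 1`, the dual q-Krawtchouk polynomial
`R_{l-m}(q^{-l}-(d/c)q^{-l}; c/d, 2l; q)` tends to
`((m+1)_{l-m}/(l+m+1)_{l-m}) (1+d/c)^{l-m} R_{l-m}^{(m,m)}((c-d)/(c+d))`. -/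
theorem dualqKrawtchouk_tendsto_jacobi (c d : ℝ) (hc : 0 < c) (hd : 0 < d)
    (l m : ℕ) (hm : m ≤ l) :
    Tendsto (fun q : ℝ => dualqKrawtchouk q (l - m) l (d / c))
      (nhdsWithin 1 (Set.Ioo 0 1))
      (nhds (pochhammerR (m + 1) (l - m) / pochhammerR (l + m + 1) (l - m)
        * (1 + d / c) ^ (l - m) * jacobiR (l - m) m m ((c - d) / (c + d)))) := by
  obtain ⟨n, rfl⟩ : ∃ n, l = n + m := ⟨l - m, by omega⟩
  have hn : n + m - m = n := by omega
  rw [hn]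
  have hu : 0 < d / c := div_pos hd hc
  have hcd : (0:ℝ) < c + d := by linarith
  have h1u : (0:ℝ) < 1 + d / c := by positivity
  have hy : (1 - (c - d)/(c + d))/2 = (d/c)/(1 + d/c) := by
    field_simp
    ring
  have hval : pochhammerR (↑m + 1) n / pochhammerR (↑(n+m) + ↑m + 1) n * (1 + d/c)^n
        * jacobiR n (↑m) (↑m) ((c - d)/(c + d))
      = ∑ k ∈ range (n+1),
        (∏ j ∈ range k, (((j:ℝ) - (n:ℝ))/((j:ℝ) - 2*((n+m:ℕ):ℝ)))) *
        (∏ j ∈ range k, (((j:ℝ) - ((n+m:ℕ):ℝ))/((j:ℝ) + 1))) * (1+d/c)^k := by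
    simp only [jacobiR, pochhammerR, hy]
    rw [rhs_eq (d/c) hu n m, ← lhs_eq (d/c) n m]
  rw [hval]
  exact tendsto_aux (d/c) n (n+m) (by omega)
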